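/- Every positive compact operator T from a normed lattice E to a normed lattice F is quasi-c-σ-Levi: for every norm-bounded increasing sequence (x_n) in E_+, the sequence (Tx_n) is order convergent in F. -/

import Mathlib

/-- `p ↓ 0` : `p` is decreasing with infimum `0`. -/
def DownToZero {F : Type*} [Lattice F] [AddCommGroup F] (p : ℕ → F) : Prop :=
  Antitone p ∧ IsGLB (Set.range p) 0

/-- order convergence of a sequence to a point. -/
def OrderConvTo {F : Type*} [Lattice F] [AddCommGroup F] (y : ℕ → F) (l : F) : Prop :=
  ∃ p : ℕ → F, DownToZero p ∧ ∀ n, |y n - l| ≤ p n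

/-- every positive compact operator between normed lattices is
quasi-c-σ-Levi. -/
theorem positive_compact_is_quasi_c_sigma_Levi
    {E F : Type*} [NormedAddCommGroup E] [Lattice E] [HasSolidNorm E] [IsOrderedAddMonoid E]
    [NormedSpace ℝ E]
    [NormedAddCommGroup F] [Lattice F] [HasSolidNorm F] [IsOrderedAddMonoid F]
    [NormedSpace ℝ F]
    (T : E →ₗ[ℝ] F)
    (hpos : ∀ x : E, 0 ≤ x → 0 ≤ T x)
    (hcomp : IsCompact (closure (T '' Metric.closedBall 0 1)))
    (x : ℕ → E) (hmono : Monotone x) (hxpos : ∀ n, 0 ≤ x n)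
    (hbdd : ∃ M : ℝ, ∀ n, ‖x n‖ ≤ M) :
    ∃ y : F, OrderConvTo (fun n => T (x n)) y := by
  obtain ⟨M, hM⟩ := hbdd
  set M' : ℝ := max M 1 with hM'def
  have hM'pos : 0 < M' := lt_of_lt_of_le one_pos (le_max_right _ _)
  have hmem : ∀ n, T (M'⁻¹ • x n) ∈ closure (T '' Metric.closedBall 0 1) := by
    intro n
    apply subset_closure
    refine ⟨M'⁻¹ • x n, ?_, rfl⟩
    rw [Metric.mem_closedBall, dist_zero_right, norm_smul, norm_inv,
      Real.norm_of_nonneg hM'pos.le]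
    calc M'⁻¹ * ‖x n‖ ≤ M'⁻¹ * M' := by
          apply mul_le_mul_of_nonneg_left _ (inv_nonneg.2 hM'pos.le)
          exact le_trans (hM n) (le_max_left _ _)
      _ = 1 := inv_mul_cancel₀ hM'pos.ne'
  obtain ⟨z, _, φ, hφmono, hφtend⟩ := hcomp.tendsto_subseq hmem
  set y : F := M' • z with hydef
  have htend : Filter.Tendsto (fun k => T (x (φ k))) Filter.atTop (nhds y) := by
    have heq : ∀ k, T (x (φ k)) = M' • T (M'⁻¹ • x (φ k)) := by
      intro k
      rw [map_smul, smul_smul, mul_inv_cancel₀ hM'pos.ne', one_smul]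
    simp_rw [heq]
    exact hφtend.const_smul M'
  have hTmono : Monotone (fun n => T (x n)) := by
    intro a b h
    have := hpos (x b - x a) (sub_nonneg.2 (hmono h))
    simpa [map_sub, sub_nonneg] using this
  have hle : ∀ n, T (x n) ≤ y := by
    intro n
    apply ge_of_tendsto htend
    filter_upwards [Filter.eventually_ge_atTop n] with k hk
    exact hTmono (le_trans hk (hφmono.le_apply))
  refine ⟨y, fun n => y - T (x n), ⟨?_, ?_⟩, ?_⟩
  · intro a b h
    exact sub_le_sub_left (hTmono h) y
  · constructor
    · rintro p ⟨n, rfl⟩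
      simpa [sub_nonneg] using hle n
    · intro c hc
      have hcall : ∀ k, T (x (φ k)) ≤ y - c := by
        intro k
        exact le_sub_comm.mp (hc ⟨φ k, rfl⟩)
      have hyc : y ≤ y - c := le_of_tendsto htend (Filter.Eventually.of_forall hcall)
      exact (le_sub_self_iff y).mp hyc
  · intro n
    rw [abs_of_nonpos (sub_nonpos.2 (hle n))]
    simp
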